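/- Let G be the group with presentation ⟨a, b | aba = bab, a² = b²⟩. Then the abelianization G/[G,G] is infinite cyclic, and for every n ≥ 0 one has G_r^{(n+1)} = [G,G] and the abelianization G_r^{(n+1)}/[G_r^{(n+1)}, G_r^{(n+1)}] is isomorphic to ℤ/3ℤ; that is, all higher-order Alexander modules of G are isomorphic to ℤ/3ℤ. -/

import Mathlib

/-- One step of the rational derived series: for a subgroup `H` of `G`, the next term is
the set of elements of `H` whose image in the abelianization `H/[H,H]` is torsion,
i.e. the preimage in `H` of the torsion subgroup of the abelianization of `H`,
regarded as a subgroup of `G`. -/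
def rdsSucc {G : Type*} [Group G] (H : Subgroup G) : Subgroup G :=
  ((CommGroup.torsion (Abelianization H)).comap Abelianization.of).map H.subtype

/-- The rational derived series of a group `G`. -/
def rds (G : Type*) [Group G] : ℕ → Subgroup G
  | 0 => ⊤
  | n + 1 => rdsSucc (rds G n)

theorem rdsSucc_normal {G : Type*} [Group G] (H : Subgroup G) [H.Normal] :
    (rdsSucc H).Normal := by
  constructor
  intro x hx c
  rw [rdsSucc, Subgroup.mem_map] at hx ⊢
  obtain ⟨y, hy, rfl⟩ := hx
  rw [Subgroup.mem_comap, CommGroup.mem_torsion, isOfFinOrder_iff_pow_eq_one] at hy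
  obtain ⟨m, hm, hym⟩ := hy
  have hker : ∀ z : H, Abelianization.of z = 1 ↔ z ∈ commutator H := fun z =>
    QuotientGroup.eq_one_iff z
  have hym' : y ^ m ∈ commutator ↥H := by
    rw [← hker]
    rw [← map_pow] at hym
    exact hym
  have hcomm : Subgroup.map H.subtype (commutator ↥H) = ⁅H, H⁆ := by
    rw [commutator, Subgroup.map_commutator, ← MonoidHom.range_eq_map, Subgroup.range_subtype]
  have hmemH : c * (H.subtype y) * c⁻¹ ∈ H := Subgroup.Normal.conj_mem ‹H.Normal› _ y.2 c
  refine ⟨⟨c * (H.subtype y) * c⁻¹, hmemH⟩, ?_, rfl⟩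
  rw [Subgroup.mem_comap, CommGroup.mem_torsion, isOfFinOrder_iff_pow_eq_one]
  refine ⟨m, hm, ?_⟩
  rw [← map_pow, hker]
  have h1 : H.subtype ((⟨c * (H.subtype y) * c⁻¹, hmemH⟩ : H) ^ m)
      = c * (H.subtype (y ^ m)) * c⁻¹ := by
    rw [map_pow, map_pow]
    exact conj_pow
  have h2 : H.subtype ((⟨c * (H.subtype y) * c⁻¹, hmemH⟩ : H) ^ m)
      ∈ Subgroup.map H.subtype (commutator ↥H) := by
    rw [hcomm, h1]
    exact Subgroup.Normal.conj_mem inferInstance _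
      (by rw [← hcomm]; exact Subgroup.mem_map_of_mem _ hym') c
  rwa [Subgroup.mem_map_iff_mem (Subgroup.subtype_injective H)] at h2

instance rds_normal (G : Type*) [Group G] (n : ℕ) : (rds G n).Normal := by
  induction n with
  | zero => rw [show rds G 0 = ⊤ from rfl]; infer_instance
  | succ n ih => exact rdsSucc_normal (rds G n)

instance rds_subgroupOf_normal (G : Type*) [Group G] (n i : ℕ) :
    ((rds G n).subgroupOf (rds G i)).Normal :=
  (rds_normal G n).subgroupOf _

/-- The relators `(aba)(bab)⁻¹` and `a²b⁻²` of the presentation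
`⟨a, b | aba = bab, a² = b²⟩` of the fundamental group of the affine complement of
Zariski's three-cuspidal quartic (with a generic line at infinity). -/
def zariskiRels : Set (FreeGroup (Fin 2)) :=
  {FreeGroup.of 0 * FreeGroup.of 1 * FreeGroup.of 0 *
      (FreeGroup.of 1 * FreeGroup.of 0 * FreeGroup.of 1)⁻¹,
   FreeGroup.of 0 ^ 2 * (FreeGroup.of 1 ^ 2)⁻¹}


namespace ZariskiAux

abbrev ZG := PresentedGroup zariskiRels

/-- The element `u = a * b⁻¹`. -/
def zu : ZG := PresentedGroup.of 0 * (PresentedGroup.of 1)⁻¹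

local notation "a" => (PresentedGroup.of 0 : ZG)
local notation "b" => (PresentedGroup.of 1 : ZG)

lemma zr_rel : ∀ r ∈ zariskiRels, (QuotientGroup.mk r : ZG) = 1 := fun r hr =>
  (QuotientGroup.eq_one_iff r).mpr (Subgroup.subset_normalClosure hr)

lemma zr_h1 : a * b * a = b * a * b := by
  have h := zr_rel _ (Set.mem_insert _ _)
  simp only [QuotientGroup.mk_mul, QuotientGroup.mk_inv, mul_inv_eq_one] at h
  exact h

lemma zr_h2 : a * a = b * b := by
  have h := zr_rel _ (Set.mem_insert_of_mem _ rfl)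
  simp only [QuotientGroup.mk_mul, QuotientGroup.mk_inv, QuotientGroup.mk_pow,
    mul_inv_eq_one] at h
  rw [← pow_two, ← pow_two]
  exact h

lemma zr_e : b⁻¹ * a * b = a * b * a⁻¹ := by
  calc b⁻¹ * a * b = b⁻¹ * (a * b * a) * a⁻¹ := by group
    _ = b⁻¹ * (b * a * b) * a⁻¹ := by rw [zr_h1]
    _ = a * b * a⁻¹ := by group

lemma zr_u3 : zu ^ 3 = 1 := by
  show (a * b⁻¹) ^ 3 = 1
  calc (a * b⁻¹) ^ 3 = (a * b⁻¹) * (a * b⁻¹) * (a * b⁻¹) := by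
        rw [pow_succ, pow_succ, pow_one]
    _ = a * (b⁻¹ * a * b) * (b * b)⁻¹ * a * b⁻¹ := by group
    _ = a * (a * b * a⁻¹) * (a * a)⁻¹ * a * b⁻¹ := by rw [zr_e, ← zr_h2]
    _ = (a * a) * (b * (a * a)⁻¹ * b⁻¹) := by group
    _ = (b * b) * (b * (b * b)⁻¹ * b⁻¹) := by rw [zr_h2]
    _ = 1 := by group

lemma zr_ha : a * zu * a⁻¹ = zu⁻¹ := by
  show a * (a * b⁻¹) * a⁻¹ = (a * b⁻¹)⁻¹
  calc a * (a * b⁻¹) * a⁻¹ = (a * a) * b⁻¹ * a⁻¹ := by group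
    _ = (b * b) * b⁻¹ * a⁻¹ := by rw [zr_h2]
    _ = (a * b⁻¹)⁻¹ := by group

lemma zr_hb : b * zu * b⁻¹ = zu⁻¹ := by
  show b * (a * b⁻¹) * b⁻¹ = (a * b⁻¹)⁻¹
  calc b * (a * b⁻¹) * b⁻¹ = b * a * (b * b)⁻¹ := by group
    _ = b * a * (a * a)⁻¹ := by rw [← zr_h2]
    _ = (a * b⁻¹)⁻¹ := by group

lemma zr_ab_eq : a⁻¹ * b = zu := by
  show a⁻¹ * b = a * b⁻¹
  calc a⁻¹ * b = a⁻¹ * (b * b) * b⁻¹ := by group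
    _ = a⁻¹ * (a * a) * b⁻¹ := by rw [zr_h2]
    _ = a * b⁻¹ := by group

/-- The homomorphism to `S₃` sending `a, b` to the transpositions `(01), (12)`. -/
def zperm : ZG →* Equiv.Perm (Fin 3) :=
  PresentedGroup.toGroup (f := ![Equiv.swap 0 1, Equiv.swap 1 2]) (by
    rintro r (rfl | rfl) <;>
      simp only [map_mul, map_inv, map_pow, FreeGroup.lift_apply_of, Matrix.cons_val_zero,
        Matrix.cons_val_one, Matrix.head_cons] <;> decide)

lemma zr_une : zu ≠ 1 := by
  intro h
  have h2 : zperm zu = 1 := by rw [h, map_one]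
  have h3 : zperm zu = Equiv.swap 0 1 * (Equiv.swap 1 2)⁻¹ := by
    show zperm (a * b⁻¹) = _
    rw [map_mul, map_inv]
    rw [show zperm a = Equiv.swap 0 1 from PresentedGroup.toGroup.of _,
      show zperm b = Equiv.swap 1 2 from PresentedGroup.toGroup.of _]
  rw [h3] at h2
  revert h2
  decide

lemma zr_orderOf : orderOf zu = 3 :=
  haveI : Fact (Nat.Prime 3) := ⟨by norm_num⟩
  orderOf_eq_prime zr_u3 zr_une

lemma zr_abof : (Abelianization.of a : Abelianization ZG) = Abelianization.of b := by
  have h := congrArg (Abelianization.of (G := ZG)) zr_h1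
  simp only [map_mul] at h
  set A := (Abelianization.of a : Abelianization ZG)
  set B := (Abelianization.of b : Abelianization ZG)
  have h' : (A * B) * A = (A * B) * B := by
    calc (A * B) * A = B * A * B := h
      _ = (A * B) * B := by rw [mul_comm B A]
  exact mul_left_cancel h'

/-- The total-degree homomorphism `G →* ℤ`. -/
def zphi : ZG →* Multiplicative ℤ :=
  PresentedGroup.toGroup (f := fun _ => Multiplicative.ofAdd 1) (by
    rintro r (rfl | rfl) <;>
      simp only [map_mul, map_inv, map_pow, FreeGroup.lift_apply_of] <;> group)

/-- The abelianization of `G` is infinite cyclic. -/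
def zAb : Abelianization ZG ≃* Multiplicative ℤ := by
  refine MonoidHom.toMulEquiv (Abelianization.lift zphi)
    (zpowersHom _ (Abelianization.of a)) ?_ ?_
  · apply Abelianization.hom_ext
    have zphi_of : ∀ j : Fin 2, zphi (PresentedGroup.of j) = Multiplicative.ofAdd 1 :=
      fun j => PresentedGroup.toGroup.of _
    ext j
    simp only [MonoidHom.comp_apply, MonoidHom.id_apply, Abelianization.lift_apply_of,
      zphi_of, zpowersHom_apply, toAdd_ofAdd, zpow_one]
    fin_cases j
    · rfl
    · exact zr_abof
  · refine MonoidHom.ext_mint ?_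
    simp [show zphi a = Multiplicative.ofAdd 1 from PresentedGroup.toGroup.of _]

lemma conj_zpow_eq {G : Type*} [Group G] {u g : G}
    (hg : g * u * g⁻¹ = u⁻¹) (k : ℤ) : g * u ^ k * g⁻¹ = u ^ (-k) := by
  have h : (MulAut.conj g) (u ^ k) = ((MulAut.conj g) u) ^ k := map_zpow _ _ _
  simp only [MulAut.conj_apply] at h
  rw [h, hg, zpow_neg, inv_zpow]

/-- Conjugation inverting `u` normalizes `zpowers u`. -/
lemma mem_normalizer_of_conj_inv {G : Type*} [Group G] {u g : G}
    (hg : g * u * g⁻¹ = u⁻¹) : g ∈ Subgroup.normalizer (Subgroup.zpowers u : Set G) := by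
  have h3 : g * u⁻¹ * g⁻¹ = u := by
    calc g * u⁻¹ * g⁻¹ = (g * u * g⁻¹)⁻¹ := by group
      _ = (u⁻¹)⁻¹ := by rw [hg]
      _ = u := by group
  have hg2 : g⁻¹ * u * (g⁻¹)⁻¹ = u⁻¹ := by
    calc g⁻¹ * u * (g⁻¹)⁻¹ = g⁻¹ * (g * u⁻¹ * g⁻¹) * (g⁻¹)⁻¹ := by rw [h3]
      _ = u⁻¹ := by group
  rw [Subgroup.mem_normalizer_iff]
  intro h
  constructor
  · intro hmem
    rw [Subgroup.mem_zpowers_iff] at hmem ⊢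
    obtain ⟨k, rfl⟩ := hmem
    exact ⟨-k, (conj_zpow_eq hg k).symm⟩
  · intro hmem
    rw [Subgroup.mem_zpowers_iff] at hmem ⊢
    obtain ⟨k, hk⟩ := hmem
    refine ⟨-k, ?_⟩
    rw [← conj_zpow_eq hg2 k, hk]
    group

lemma zpowers_zu_normal : (Subgroup.zpowers zu).Normal := by
  rw [← Subgroup.normalizer_eq_top_iff, eq_top_iff]
  intro g _
  refine PresentedGroup.generated_by _ _ ?_ g
  intro j
  fin_cases j
  · exact mem_normalizer_of_conj_inv zr_ha
  · exact mem_normalizer_of_conj_inv zr_hb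

lemma zr_commutator : commutator ZG = Subgroup.zpowers zu := by
  have hN : (Subgroup.zpowers zu).Normal := zpowers_zu_normal
  apply le_antisymm
  · set N := Subgroup.zpowers zu
    have hcyc : IsCyclic (ZG ⧸ N) := by
      constructor
      refine ⟨QuotientGroup.mk a, ?_⟩
      intro x
      obtain ⟨g, rfl⟩ := QuotientGroup.mk_surjective x
      have : g ∈ (Subgroup.zpowers ((QuotientGroup.mk a : ZG ⧸ N))).comap
          (QuotientGroup.mk' N) := by
        refine PresentedGroup.generated_by _ _ ?_ g
        intro j
        fin_cases j
        · exact Subgroup.mem_zpowers _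
        · simp only [Subgroup.mem_comap, QuotientGroup.mk'_apply]
          have hba : (QuotientGroup.mk a : ZG ⧸ N) = QuotientGroup.mk b := by
            rw [QuotientGroup.eq]
            exact (Subgroup.mem_zpowers_iff).mpr ⟨1, by rw [zpow_one]; exact zr_ab_eq.symm⟩
          show (QuotientGroup.mk b : ZG ⧸ N) ∈ _
          rw [← hba]
          exact Subgroup.mem_zpowers _
      exact this
    letI := hcyc
    letI : CommGroup (ZG ⧸ N) := IsCyclic.commGroup
    have h := Abelianization.commutator_subset_ker (QuotientGroup.mk' N)
    rwa [QuotientGroup.ker_mk'] at h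
  · rw [Subgroup.zpowers_le]
    have h1 : (Abelianization.of zu : Abelianization ZG) = 1 := by
      rw [show zu = a * b⁻¹ from rfl, map_mul, map_inv, zr_abof, mul_inv_cancel]
    exact (QuotientGroup.eq_one_iff zu).mp h1

lemma multInt_eq_one_of_finOrder {x : Multiplicative ℤ} (hx : IsOfFinOrder x) : x = 1 := by
  obtain ⟨n, hn, h⟩ := isOfFinOrder_iff_pow_eq_one.mp hx
  have h2 : (x ^ n).toAdd = (1 : Multiplicative ℤ).toAdd := by rw [h]
  rw [toAdd_pow, toAdd_one] at h2
  have h0 : x.toAdd = 0 := by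
    rcases mul_eq_zero.mp h2 with h3 | h3
    · exact absurd (Nat.cast_eq_zero.mp h3) hn.ne'
    · exact h3
  rw [← ofAdd_toAdd x, h0, ofAdd_zero]

lemma rdsSucc_eq_self_of_torsion {G : Type*} [Group G] (H : Subgroup G)
    (h : ∀ z : ↥H, IsOfFinOrder z) : rdsSucc H = H := by
  unfold rdsSucc
  have ht : (CommGroup.torsion (Abelianization ↥H)).comap
      (Abelianization.of (G := ↥H)) = ⊤ := by
    rw [eq_top_iff]
    intro z _
    rw [Subgroup.mem_comap, CommGroup.mem_torsion]
    exact Abelianization.of.isOfFinOrder (h z)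
  rw [ht, ← MonoidHom.range_eq_map, Subgroup.range_subtype]

lemma rdsSucc_top_eq_commutator {G : Type*} [Group G]
    (h : ∀ y : Abelianization ↥(⊤ : Subgroup G), IsOfFinOrder y → y = 1) :
    rdsSucc (⊤ : Subgroup G) = commutator G := by
  unfold rdsSucc
  have ht : (CommGroup.torsion (Abelianization ↥(⊤ : Subgroup G))).comap
      (Abelianization.of (G := ↥(⊤ : Subgroup G))) = commutator ↥(⊤ : Subgroup G) := by
    ext y
    rw [Subgroup.mem_comap, CommGroup.mem_torsion, ← QuotientGroup.eq_one_iff y]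
    constructor
    · intro hf
      exact h _ hf
    · intro h1
      have h2 : (Abelianization.of y : Abelianization ↥(⊤ : Subgroup G)) = 1 := h1
      rw [h2]
      exact IsOfFinOrder.one
  rw [ht, commutator_def, Subgroup.map_commutator, ← MonoidHom.range_eq_map,
    Subgroup.range_subtype]
  rfl

/-- The abelianization of a cyclic group of order 3. -/
noncomputable def cyc3equiv {G : Type*} [Group G] (u : G) (h : orderOf u = 3) :
    Abelianization ↥(Subgroup.zpowers u) ≃* Multiplicative (ZMod 3) := by
  haveI : IsCyclic ↥(Subgroup.zpowers u) := by
    constructor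
    refine ⟨⟨u, Subgroup.mem_zpowers u⟩, ?_⟩
    intro x
    obtain ⟨k, hk⟩ := Subgroup.mem_zpowers_iff.mp x.2
    exact Subgroup.mem_zpowers_iff.mpr ⟨k, Subtype.ext (by rw [← hk]; simp)⟩
  letI : CommGroup ↥(Subgroup.zpowers u) := IsCyclic.commGroup
  refine (Abelianization.equivOfComm.symm).trans (mulEquivOfCyclicCardEq ?_)
  rw [Nat.card_zpowers, h, Nat.card_eq_fintype_card]
  rfl

lemma zr_top_torsionfree :
    ∀ y : Abelianization ↥(⊤ : Subgroup ZG), IsOfFinOrder y → y = 1 := by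
  intro y hy
  have E : Abelianization ↥(⊤ : Subgroup ZG) ≃* Multiplicative ℤ :=
    (Subgroup.topEquiv.abelianizationCongr).trans zAb
  have h1 : E y = 1 := multInt_eq_one_of_finOrder (E.toMonoidHom.isOfFinOrder hy)
  apply E.injective
  rw [h1, map_one]

lemma zr_zpowers_torsion : ∀ z : ↥(Subgroup.zpowers zu), IsOfFinOrder z := by
  intro z
  rw [isOfFinOrder_iff_pow_eq_one]
  refine ⟨3, by norm_num, ?_⟩
  apply Subtype.ext
  obtain ⟨k, hk⟩ := Subgroup.mem_zpowers_iff.mp z.2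
  have : ((z ^ 3 : ↥(Subgroup.zpowers zu)) : ZG) = ((z : ZG)) ^ 3 := by
    simp
  rw [this, ← hk, ← zpow_natCast, ← zpow_mul, mul_comm, zpow_mul]
  rw [zpow_natCast, zr_u3, one_zpow, OneMemClass.coe_one]

lemma zr_rds : ∀ n : ℕ, rds ZG (n + 1) = commutator ZG := by
  intro n
  induction n with
  | zero =>
    show rdsSucc (rds ZG 0) = _
    rw [show rds ZG 0 = ⊤ from rfl]
    exact rdsSucc_top_eq_commutator zr_top_torsionfree
  | succ n ih =>
    show rdsSucc (rds ZG (n + 1)) = _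
    rw [ih, zr_commutator]
    exact rdsSucc_eq_self_of_torsion _ zr_zpowers_torsion

end ZariskiAux

/-- For `G = ⟨a, b | aba = bab, a² = b²⟩`, the abelianization `G/[G,G]` is
infinite cyclic, and for every `n ≥ 0` one has `G_r^{(n+1)} = [G,G]` and the abelianization
`G_r^{(n+1)}/[G_r^{(n+1)},G_r^{(n+1)}]` is isomorphic to `ℤ/3ℤ`. -/
theorem zariski_higher_alexander_modules :
    Nonempty (Abelianization (PresentedGroup zariskiRels) ≃* Multiplicative ℤ) ∧
    ∀ n : ℕ,
      rds (PresentedGroup zariskiRels) (n + 1) = commutator (PresentedGroup zariskiRels) ∧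
      Nonempty (Abelianization ↥(rds (PresentedGroup zariskiRels) (n + 1)) ≃*
        Multiplicative (ZMod 3)) := by
  
  refine ⟨⟨ZariskiAux.zAb⟩, fun n => ⟨ZariskiAux.zr_rds n, ?_⟩⟩
  rw [ZariskiAux.zr_rds n, ZariskiAux.zr_commutator]
  exact ⟨ZariskiAux.cyc3equiv ZariskiAux.zu ZariskiAux.zr_orderOf⟩
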